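/- Extending a subpath cannot decrease its minimax regret as an assumed dominant part: for 0 ≤ l ≤ r < n one has R_{lr} ≤ R_{l(r+1)}, and for 0 < l ≤ r ≤ n one has R_{lr} ≤ R_{(l−1)r}. -/

import Mathlib

/-- Maximum of `f` over a finite set of indices, with the empty maximum being `0`. -/
noncomputable def maxOver (S : Finset ℕ) (f : ℕ → ℝ) : ℝ := S.fold max 0 f

/-- Left evacuation time to sink `x t` of the subpath starting at `x l`, under weights `w`. -/
noncomputable def thetaL (x : ℕ → ℝ) (τ : ℝ) (w : ℕ → ℝ) (l t : ℕ) : ℝ :=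
  maxOver (Finset.Ico l t) (fun i => (x t - x i) * τ + ∑ j ∈ Finset.Icc l i, w j)

/-- Right evacuation time to sink `x t` of the subpath ending at `x r`, under weights `w`. -/
noncomputable def thetaR (x : ℕ → ℝ) (τ : ℝ) (w : ℕ → ℝ) (t r : ℕ) : ℝ :=
  maxOver (Finset.Ioc t r) (fun i => (x i - x t) * τ + ∑ j ∈ Finset.Icc i r, w j)

/-- 1-sink evacuation time `Θ¹([x_l,x_r], x_t, w)`. -/
noncomputable def theta1 (x : ℕ → ℝ) (τ : ℝ) (w : ℕ → ℝ) (l t r : ℕ) : ℝ :=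
  max (thetaL x τ w l t) (thetaR x τ w t r)

/-- A scenario assigns each vertex a weight within its bounds. -/
def IsScenario (n : ℕ) (wlo whi : ℕ → ℝ) (s : ℕ → ℝ) : Prop :=
  ∀ i, i ≤ n → wlo i ≤ s i ∧ s i ≤ whi i

/-- A `k`-partition-with-sinks of the vertex set `{0,…,n}` into `k` consecutive
nonempty blocks `{l p, …, r p}` (`p ∈ {1,…,k}`) with a sink `t p` in each block. -/
structure KPartSinks (n k : ℕ) where
  l : ℕ → ℕ
  r : ℕ → ℕ
  t : ℕ → ℕ
  first : l 1 = 0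
  last : r k = n
  consec : ∀ p, 1 ≤ p → p < k → l (p + 1) = r p + 1
  block_nonempty : ∀ p, 1 ≤ p → p ≤ k → l p ≤ r p
  sink_lb : ∀ p, 1 ≤ p → p ≤ k → l p ≤ t p
  sink_ub : ∀ p, 1 ≤ p → p ≤ k → t p ≤ r p

/-- `k`-sink evacuation time `Θᵏ(P, {P̂,Ŷ}, w)`. -/
noncomputable def thetaK {n k : ℕ} (x : ℕ → ℝ) (τ : ℝ) (PY : KPartSinks n k) (w : ℕ → ℝ) : ℝ :=
  maxOver (Finset.Icc 1 k) (fun p => theta1 x τ w (PY.l p) (PY.t p) (PY.r p))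

/-- Optimal `k`-sink evacuation time `Θᵏ_opt(P, w)`. -/
noncomputable def thetaOpt (x : ℕ → ℝ) (τ : ℝ) (n k : ℕ) (w : ℕ → ℝ) : ℝ :=
  sInf {v : ℝ | ∃ PY : KPartSinks n k, thetaK x τ PY w = v}

/-- Regret `R({P̂,Ŷ}, w)`. -/
noncomputable def regret {n k : ℕ} (x : ℕ → ℝ) (τ : ℝ) (PY : KPartSinks n k) (w : ℕ → ℝ) : ℝ :=
  thetaK x τ PY w - thetaOpt x τ n k w

/-- Max-regret `R_max({P̂,Ŷ})`. -/
noncomputable def maxRegret {n k : ℕ} (x : ℕ → ℝ) (τ : ℝ) (wlo whi : ℕ → ℝ)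
    (PY : KPartSinks n k) : ℝ :=
  sSup {v : ℝ | ∃ s : ℕ → ℝ, IsScenario n wlo whi s ∧ regret x τ PY s = v}

/-- A worst-case scenario: a scenario attaining the max-regret. -/
def IsWorstCase {n k : ℕ} (x : ℕ → ℝ) (τ : ℝ) (wlo whi : ℕ → ℝ) (PY : KPartSinks n k)
    (s : ℕ → ℝ) : Prop :=
  IsScenario n wlo whi s ∧ regret x τ PY s = maxRegret x τ wlo whi PY

/-- `d` is the index of the dominant part of `{P̂,Ŷ}` under weights `w`:
the smallest index attaining `max_p Θ¹(P_p, y_p, w)`. -/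
def IsDominant {n k : ℕ} (x : ℕ → ℝ) (τ : ℝ) (PY : KPartSinks n k) (w : ℕ → ℝ) (d : ℕ) : Prop :=
  1 ≤ d ∧ d ≤ k ∧
  (∀ p, 1 ≤ p → p ≤ k →
    theta1 x τ w (PY.l p) (PY.t p) (PY.r p) ≤ theta1 x τ w (PY.l d) (PY.t d) (PY.r d)) ∧
  (∀ p, 1 ≤ p → p < d →
    theta1 x τ w (PY.l p) (PY.t p) (PY.r p) < theta1 x τ w (PY.l d) (PY.t d) (PY.r d))

/-- `R_{lr}(x_t)`: the max-regret of the subpath `[x_l,x_r]` as assumed dominant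
part with sink `x_t`. -/
noncomputable def Rsink (x : ℕ → ℝ) (τ : ℝ) (wlo whi : ℕ → ℝ) (n k : ℕ) (l r t : ℕ) : ℝ :=
  sSup {v : ℝ | ∃ s : ℕ → ℝ, IsScenario n wlo whi s ∧
    theta1 x τ s l t r - thetaOpt x τ n k s = v}

/-- `R_{lr}`: the minimax regret of the subpath `[x_l,x_r]` as assumed dominant part. -/
noncomputable def Rlr (x : ℕ → ℝ) (τ : ℝ) (wlo whi : ℕ → ℝ) (n k : ℕ) (l r : ℕ) : ℝ :=
  sInf {v : ℝ | ∃ t, l ≤ t ∧ t ≤ r ∧ Rsink x τ wlo whi n k l r t = v}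

/-- A partition of `{0,…,i}` into `q` consecutive nonempty blocks `{l p, …, r p}`. -/
def IsQPartition (q i : ℕ) (l r : ℕ → ℕ) : Prop :=
  l 1 = 0 ∧ r q = i ∧ (∀ p, 1 ≤ p → p < q → l (p + 1) = r p + 1) ∧
  (∀ p, 1 ≤ p → p ≤ q → l p ≤ r p)

/-- `M(q, i)`: the minimum over partitions of `{0,…,i}` into `q` consecutive
nonempty blocks of `max_p R_{l_p r_p}`. -/
noncomputable def Mreg (x : ℕ → ℝ) (τ : ℝ) (wlo whi : ℕ → ℝ) (n k : ℕ) (q i : ℕ) : ℝ :=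
  sInf {v : ℝ | ∃ lf rf : ℕ → ℕ, IsQPartition q i lf rf ∧
    maxOver (Finset.Icc 1 q) (fun p => Rlr x τ wlo whi n k (lf p) (rf p)) = v}

/-- Left-dominant scenario on `{l,…,r}`. -/
def LeftDominant (wlo whi s : ℕ → ℝ) (l r : ℕ) : Prop :=
  ∃ i, l ≤ i ∧ i ≤ r + 1 ∧ (∀ j, l ≤ j → j < i → s j = whi j) ∧
    (∀ j, i ≤ j → j ≤ r → s j = wlo j)

/-- Right-dominant scenario on `{l,…,r}`. -/
def RightDominant (wlo whi s : ℕ → ℝ) (l r : ℕ) : Prop :=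
  ∃ i, l ≤ i ∧ i ≤ r + 1 ∧ (∀ j, l ≤ j → j < i → s j = wlo j) ∧
    (∀ j, i ≤ j → j ≤ r → s j = whi j)

lemma maxOver_nonneg' (S : Finset ℕ) (f : ℕ → ℝ) : 0 ≤ maxOver S f :=
  (Finset.le_fold_max _).2 (Or.inl le_rfl)

lemma maxOver_mono' (S T : Finset ℕ) (f g : ℕ → ℝ) (hST : S ⊆ T)
    (h : ∀ i ∈ S, f i ≤ g i) : maxOver S f ≤ maxOver T g := by
  rw [maxOver, Finset.fold_max_le]
  exact ⟨maxOver_nonneg' T g, fun i hi =>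
    le_trans (h i hi) ((Finset.le_fold_max _).2 (Or.inr ⟨i, hST hi, le_rfl⟩))⟩

lemma thetaOpt_nonneg' (x : ℕ → ℝ) (τ : ℝ) (n k : ℕ) (w : ℕ → ℝ) :
    0 ≤ thetaOpt x τ n k w := by
  apply Real.sInf_nonneg
  rintro v ⟨PY, rfl⟩
  exact maxOver_nonneg' _ _

lemma theta1_le_whi' (n : ℕ) (x : ℕ → ℝ) (τ : ℝ) (whi s : ℕ → ℝ)
    (hs : ∀ i, i ≤ n → s i ≤ whi i) (l t r : ℕ) (htr : t ≤ r) (hrn : r ≤ n) :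
    theta1 x τ s l t r ≤ theta1 x τ whi l t r := by
  apply max_le_max
  · refine maxOver_mono' _ _ _ _ (subset_refl _) fun i hi => ?_
    rw [Finset.mem_Ico] at hi
    refine add_le_add_right (Finset.sum_le_sum fun j hj => ?_) _
    rw [Finset.mem_Icc] at hj
    exact hs j (by omega)
  · refine maxOver_mono' _ _ _ _ (subset_refl _) fun i hi => ?_
    rw [Finset.mem_Ioc] at hi
    refine add_le_add_right (Finset.sum_le_sum fun j hj => ?_) _
    rw [Finset.mem_Icc] at hj
    exact hs j (by omega)

lemma Rsink_le_Rsink' (n k : ℕ) (x : ℕ → ℝ) (τ : ℝ) (wlo whi : ℕ → ℝ)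
    (hw : ∀ i, i ≤ n → 0 < wlo i ∧ wlo i ≤ whi i)
    (l r t' l2 r2 t : ℕ) (ht : t ≤ r2) (hr2 : r2 ≤ n)
    (hmono : ∀ s : ℕ → ℝ, IsScenario n wlo whi s →
      theta1 x τ s l t' r ≤ theta1 x τ s l2 t r2) :
    Rsink x τ wlo whi n k l r t' ≤ Rsink x τ wlo whi n k l2 r2 t := by
  have hscen : IsScenario n wlo whi wlo := fun i hi => ⟨le_rfl, (hw i hi).2⟩
  have hBdd : BddAbove {v : ℝ | ∃ s, IsScenario n wlo whi s ∧
      theta1 x τ s l2 t r2 - thetaOpt x τ n k s = v} := by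
    refine ⟨theta1 x τ whi l2 t r2, ?_⟩
    rintro v ⟨s, hs, rfl⟩
    have h1 : theta1 x τ s l2 t r2 ≤ theta1 x τ whi l2 t r2 :=
      theta1_le_whi' n x τ whi s (fun i hi => (hs i hi).2) l2 t r2 ht hr2
    have h2 : 0 ≤ thetaOpt x τ n k s := thetaOpt_nonneg' x τ n k s
    linarith
  refine csSup_le ⟨_, wlo, hscen, rfl⟩ ?_
  rintro v ⟨s, hs, rfl⟩
  refine le_trans ?_ (le_csSup hBdd ⟨s, hs, rfl⟩)
  have := hmono s hs
  linarith

/-- extending a subpath cannot decrease its minimax regret as an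
assumed dominant part. -/
theorem stmt_5 (n k : ℕ) (x : ℕ → ℝ) (τ : ℝ) (wlo whi : ℕ → ℝ)
    (hx : ∀ i, i < n → x i < x (i + 1)) (hτ : 0 < τ)
    (hw : ∀ i, i ≤ n → 0 < wlo i ∧ wlo i ≤ whi i) (hk : 1 ≤ k)
    (l r : ℕ) (hlr : l ≤ r) :
    (r < n → Rlr x τ wlo whi n k l r ≤ Rlr x τ wlo whi n k l (r + 1)) ∧
    (0 < l → r ≤ n → Rlr x τ wlo whi n k l r ≤ Rlr x τ wlo whi n k (l - 1) r) := by
  have hD : BddBelow {v : ℝ | ∃ u, l ≤ u ∧ u ≤ r ∧ Rsink x τ wlo whi n k l r u = v} := by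
    apply Set.Finite.bddBelow
    apply Set.Finite.subset ((Set.finite_Icc l r).image (Rsink x τ wlo whi n k l r))
    rintro v ⟨u, h1, h2, rfl⟩
    exact ⟨u, Set.mem_Icc.2 ⟨h1, h2⟩, rfl⟩
  have spos : ∀ s : ℕ → ℝ, IsScenario n wlo whi s → ∀ j, j ≤ n → 0 ≤ s j := by
    intro s hs j hj
    exact le_trans (hw j hj).1.le (hs j hj).1
  constructor
  · intro hrn
    refine le_csInf ⟨Rsink x τ wlo whi n k l (r + 1) l, l, le_rfl, by omega, rfl⟩ ?_
    rintro b ⟨t, h1, h2, rfl⟩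
    by_cases hc : t ≤ r
    · refine le_trans (csInf_le hD ⟨t, h1, hc, rfl⟩) ?_
      refine Rsink_le_Rsink' n k x τ wlo whi hw l r t l (r + 1) t (by omega) (by omega) ?_
      intro s hs
      apply max_le_max le_rfl
      refine maxOver_mono' _ _ _ _ (Finset.Ioc_subset_Ioc le_rfl (by omega)) fun i hi => ?_
      rw [Finset.mem_Ioc] at hi
      refine add_le_add_right ?_ _
      refine Finset.sum_le_sum_of_subset_of_nonneg
        (Finset.Icc_subset_Icc le_rfl (by omega)) fun j hj _ => ?_
      rw [Finset.mem_Icc] at hj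
      exact spos s hs j (by omega)
    · have hteq : t = r + 1 := by omega
      subst hteq
      refine le_trans (csInf_le hD ⟨r, hlr, le_rfl, rfl⟩) ?_
      refine Rsink_le_Rsink' n k x τ wlo whi hw l r r l (r + 1) (r + 1) le_rfl (by omega) ?_
      intro s hs
      apply max_le_max
      · refine maxOver_mono' _ _ _ _ (Finset.Ico_subset_Ico le_rfl (by omega)) fun i hi => ?_
        refine add_le_add_left ?_ _
        have := hx r hrn
        nlinarith
      · refine maxOver_mono' _ _ _ _ ?_ fun i hi => ?_
        · intro a ha
          rw [Finset.mem_Ioc] at ha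
          omega
        · rw [Finset.mem_Ioc] at hi
          omega
  · intro hl hrn
    refine le_csInf ⟨Rsink x τ wlo whi n k (l - 1) r (l - 1), l - 1, le_rfl, by omega, rfl⟩ ?_
    rintro b ⟨t, h1, h2, rfl⟩
    by_cases hc : l ≤ t
    · refine le_trans (csInf_le hD ⟨t, hc, h2, rfl⟩) ?_
      refine Rsink_le_Rsink' n k x τ wlo whi hw l r t (l - 1) r t h2 hrn ?_
      intro s hs
      apply max_le_max _ le_rfl
      refine maxOver_mono' _ _ _ _ (Finset.Ico_subset_Ico (by omega) le_rfl) fun i hi => ?_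
      rw [Finset.mem_Ico] at hi
      refine add_le_add_right ?_ _
      refine Finset.sum_le_sum_of_subset_of_nonneg
        (Finset.Icc_subset_Icc (by omega) le_rfl) fun j hj _ => ?_
      rw [Finset.mem_Icc] at hj
      exact spos s hs j (by omega)
    · have hteq : t = l - 1 := by omega
      subst hteq
      refine le_trans (csInf_le hD ⟨l, le_rfl, hlr, rfl⟩) ?_
      refine Rsink_le_Rsink' n k x τ wlo whi hw l r l (l - 1) r (l - 1) (by omega) hrn ?_
      intro s hs
      apply max_le_max
      · refine maxOver_mono' _ _ _ _ ?_ fun i hi => ?_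
        · intro a ha
          rw [Finset.mem_Ico] at ha
          omega
        · rw [Finset.mem_Ico] at hi
          omega
      · refine maxOver_mono' _ _ _ _ (Finset.Ioc_subset_Ioc (by omega) le_rfl) fun i hi => ?_
        refine add_le_add_left ?_ _
        have hxl : x (l - 1) < x (l - 1 + 1) := hx (l - 1) (by omega)
        have : l - 1 + 1 = l := by omega
        rw [this] at hxl
        nlinarith
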